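/- Let G be a finite simple graph and f a function on vertex subsets satisfying properties (a)–(e) of the entropy method: f(∅)=0; monotonicity; submodularity; f(A) ≥ f(B)+1 when A ⊇ B, A is qualified and B is not; f(A)+f(B) ≥ f(A∪B)+f(A∩B)+1 when A, B are qualified but A∩B is not. If X is a core of G with |X| ≥ 2, and the independent sequence bound f(X) ≥ |X|+1 holds, then ∑_{v∈X} f({v}) ≥ 2|X| − 1. -/

import Mathlib

open scoped Classical

/-- A set of vertices is qualified if it contains both endpoints of an edge. -/
def Qualified {V : Type*} (G : SimpleGraph V) (A : Finset V) : Prop :=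
  ∃ u ∈ A, ∃ v ∈ A, G.Adj u v

/-- A core of a graph `G`: `X` induces a connected subgraph and for each
`x ∈ X` there is a neighbor `x' ∉ X` whose only neighbor in `X` is `x`, with
the set of chosen outside neighbors independent. -/
def IsCore {V : Type*} (G : SimpleGraph V) (X : Finset V) : Prop :=
  (G.induce (X : Set V)).Connected ∧
    ∃ g : V → V,
      (∀ x ∈ X, g x ∉ X ∧ G.Adj x (g x) ∧ ∀ y ∈ X, G.Adj y (g x) → y = x) ∧
      (∀ x ∈ X, ∀ y ∈ X, ¬ G.Adj (g x) (g y))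

private lemma not_qual_singleton {V : Type*} (G : SimpleGraph V) (u : V) :
    ¬ Qualified G {u} := by
  rintro ⟨a, haA, b, hbA, hab⟩
  simp only [Finset.mem_singleton] at haA hbA
  subst haA; subst hbA
  exact G.loopless.irrefl _ hab

/-- crossing lemma -/
private lemma exists_crossing {V : Type*} {G : SimpleGraph V} {X S : Finset V}
    (hconn : (G.induce (X : Set V)).Connected) (hSX : S ⊆ X)
    (hne : S.Nonempty) (hproper : S ≠ X) :
    ∃ u ∈ S, ∃ v ∈ X, v ∉ S ∧ G.Adj u v := by
  obtain ⟨a, haS⟩ := hne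
  obtain ⟨b, hbX, hbS⟩ : ∃ b ∈ X, b ∉ S := by
    by_contra h
    push_neg at h
    exact hproper (Finset.Subset.antisymm hSX h)
  have haX : a ∈ X := hSX haS
  obtain ⟨w⟩ := hconn.preconnected ⟨a, by simpa using haX⟩ ⟨b, by simpa using hbX⟩
  obtain ⟨d, _, hd1, hd2⟩ := w.exists_boundary_dart {x | x.1 ∈ S} haS hbS
  exact ⟨d.fst.1, hd1, d.snd.1, by simpa using d.snd.2, hd2, d.adj⟩

/-- the key addition step -/
private lemma step_ineq {V : Type*} {G : SimpleGraph V} (f : Finset V → ℝ)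
    (ha : f ∅ = 0)
    (hc : ∀ A B : Finset V, f (A ∪ B) + f (A ∩ B) ≤ f A + f B)
    (he : ∀ A B : Finset V, Qualified G A → Qualified G B → ¬ Qualified G (A ∩ B) →
      f (A ∪ B) + f (A ∩ B) + 1 ≤ f A + f B)
    {S : Finset V} {u v : V} (hqS : Qualified G S) (huS : u ∈ S) (hvS : v ∉ S)
    (hadj : G.Adj u v) :
    f (insert v S) + 1 ≤ f S + f {v} := by
  have hne : u ≠ v := hadj.ne
  have hunion : S ∪ ({u, v} : Finset V) = insert v S := by
    ext x
    simp only [Finset.mem_union, Finset.mem_insert, Finset.mem_singleton]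
    constructor
    · rintro (h | h | h) <;> simp_all
    · rintro (h | h) <;> simp_all
  have hinter : S ∩ ({u, v} : Finset V) = {u} := by
    ext x
    simp only [Finset.mem_inter, Finset.mem_insert, Finset.mem_singleton]
    constructor
    · rintro ⟨hx, (h | h)⟩
      · exact h
      · exact absurd (h ▸ hx) hvS
    · rintro rfl; exact ⟨huS, Or.inl rfl⟩
  have hquv : Qualified G {u, v} := ⟨u, by simp, v, by simp, hadj⟩
  have h1 := he S {u, v} hqS hquv (by rw [hinter]; exact not_qual_singleton G u)
  rw [hunion, hinter] at h1
  have h2 := hc {u} {v}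
  have hu2 : ({u} : Finset V) ∪ {v} = {u, v} := by
    ext x; simp [Finset.mem_insert]
  have hi2 : ({u} : Finset V) ∩ {v} = ∅ := by
    ext x; simp only [Finset.mem_inter, Finset.mem_singleton, Finset.notMem_empty,
      iff_false, not_and]
    rintro rfl; exact hne
  rw [hu2, hi2, ha] at h2
  linarith

private lemma build_up {V : Type*} {G : SimpleGraph V} (f : Finset V → ℝ)
    (ha : f ∅ = 0)
    (hc : ∀ A B : Finset V, f (A ∪ B) + f (A ∩ B) ≤ f A + f B)
    (he : ∀ A B : Finset V, Qualified G A → Qualified G B → ¬ Qualified G (A ∩ B) →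
      f (A ∪ B) + f (A ∩ B) + 1 ≤ f A + f B)
    {X : Finset V} (hconn : (G.induce (X : Set V)).Connected) :
    ∀ m : ℕ, ∀ S : Finset V, S ⊆ X → Qualified G S → (X \ S).card = m →
      f X + (m : ℝ) ≤ f S + ∑ v ∈ X \ S, f {v} := by
  intro m
  induction m with
  | zero =>
    intro S hSX hq hm
    have : X \ S = ∅ := Finset.card_eq_zero.mp hm
    have hSX' : S = X := by
      apply Finset.Subset.antisymm hSX
      intro x hx
      by_contra hxS
      exact (Finset.notMem_empty x) (this ▸ Finset.mem_sdiff.mpr ⟨hx, hxS⟩)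
    subst hSX'
    rw [this]
    simp
  | succ k ih =>
    intro S hSX hq hm
    have hne : S.Nonempty := by
      obtain ⟨u, hu, -⟩ := hq
      exact ⟨u, hu⟩
    have hproper : S ≠ X := by
      rintro rfl
      simp [Finset.sdiff_self] at hm
    obtain ⟨u, huS, v, hvX, hvS, hadj⟩ := exists_crossing hconn hSX hne hproper
    have hstep := step_ineq f ha hc he hq huS hvS hadj
    set S' := insert v S with hS'
    have hS'X : S' ⊆ X := Finset.insert_subset hvX hSX
    have hqS' : Qualified G S' := by
      obtain ⟨a, haa, b, hbb, hab⟩ := hq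
      exact ⟨a, Finset.mem_insert_of_mem haa, b, Finset.mem_insert_of_mem hbb, hab⟩
    have hsd : X \ S' = (X \ S).erase v := by
      ext x
      simp only [Finset.mem_sdiff, Finset.mem_erase, hS', Finset.mem_insert]
      tauto
    have hvmem : v ∈ X \ S := Finset.mem_sdiff.mpr ⟨hvX, hvS⟩
    have hcard' : (X \ S').card = k := by
      rw [hsd, Finset.card_erase_of_mem hvmem, hm]
      omega
    have hIH := ih S' hS'X hqS' hcard'
    have hsum : ∑ w ∈ X \ S, f {w} = f {v} + ∑ w ∈ (X \ S).erase v, f {w} :=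
      (Finset.add_sum_erase _ _ hvmem).symm
    rw [hsd] at hIH
    rw [hsum]
    push_cast
    linarith

/-- on a core `X` with `|X| ≥ 2`, assuming the independent
sequence bound `f(X) ≥ |X| + 1`, we get `∑_{v ∈ X} f({v}) ≥ 2|X| - 1`. -/
theorem sum_singletons_ge_core {V : Type*} (G : SimpleGraph V)
    (f : Finset V → ℝ)
    (ha : f ∅ = 0)
    (hb : ∀ A B : Finset V, B ⊆ A → f B ≤ f A)
    (hc : ∀ A B : Finset V, f (A ∪ B) + f (A ∩ B) ≤ f A + f B)
    (hd : ∀ A B : Finset V, B ⊆ A → Qualified G A → ¬ Qualified G B →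
      f B + 1 ≤ f A)
    (he : ∀ A B : Finset V, Qualified G A → Qualified G B → ¬ Qualified G (A ∩ B) →
      f (A ∪ B) + f (A ∩ B) + 1 ≤ f A + f B)
    (X : Finset V) (hX : IsCore G X) (hcard : 2 ≤ X.card)
    (hseq : (X.card : ℝ) + 1 ≤ f X) :
    2 * (X.card : ℝ) - 1 ≤ ∑ v ∈ X, f {v} := by
  obtain ⟨hconn, -⟩ := hX
  -- find an edge inside X
  obtain ⟨u, huX, w, hwX, hne⟩ := Finset.one_lt_card.mp hcard
  obtain ⟨wk⟩ := hconn.preconnected ⟨u, by simpa using huX⟩ ⟨w, by simpa using hwX⟩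
  have hedge : ∃ a ∈ X, ∃ b ∈ X, G.Adj a b := by
    cases wk with
    | nil => exact absurd rfl hne
    | cons h p =>
      rename_i b
      exact ⟨u, huX, b.1, by simpa using b.2, h⟩
  obtain ⟨a, haX, b, hbX, hab⟩ := hedge
  have hab' : a ≠ b := hab.ne
  have hS0X : ({a, b} : Finset V) ⊆ X := by
    intro x hx
    simp only [Finset.mem_insert, Finset.mem_singleton] at hx
    rcases hx with rfl | rfl <;> assumption
  have hq0 : Qualified G ({a, b} : Finset V) := ⟨a, by simp, b, by simp, hab⟩
  have hcard0 : ({a, b} : Finset V).card = 2 := Finset.card_pair hab'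
  have hcardsd : (X \ ({a, b} : Finset V)).card = X.card - 2 := by
    rw [Finset.card_sdiff_of_subset hS0X, hcard0]
  have hmain := build_up f ha hc he hconn (X.card - 2) {a, b} hS0X hq0 hcardsd
  have hsplit : ∑ v ∈ X, f {v} = (f {a} + f {b}) + ∑ v ∈ X \ ({a, b} : Finset V), f {v} := by
    rw [← Finset.sum_sdiff hS0X]
    rw [Finset.sum_pair hab']
    ring
  have hsub : f ({a, b} : Finset V) ≤ f {a} + f {b} := by
    have h2 := hc {a} {b}
    have hu2 : ({a} : Finset V) ∪ {b} = {a, b} := by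
      ext x; simp [Finset.mem_insert]
    have hi2 : ({a} : Finset V) ∩ {b} = ∅ := by
      ext x; simp only [Finset.mem_inter, Finset.mem_singleton, Finset.notMem_empty,
        iff_false, not_and]
      rintro rfl; exact hab'
    rw [hu2, hi2, ha] at h2
    linarith
  have hcast : ((X.card - 2 : ℕ) : ℝ) = (X.card : ℝ) - 2 := by
    have := hcard
    push_cast [Nat.cast_sub hcard]
    ring
  rw [hcast] at hmain
  rw [hsplit]
  linarith
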